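/- Let G be a finite graph with n edges and fix an ordering of E(G). For each vertex α ∈ {0,1}^n of the cube with corresponding edge subset S_α, set C^α(G) = A^{⊗|S_α|} ⊗ A^{⊗b₀([G:S_α])} ⊗ B^{⊗b₁([G:S_α])} where A = ℤ[t]/(t²) and B = ℤ[w]/(w²), and let C^i(G) = ⊕_{|α|=i} C^α(G) with differential d^i = Σ_{|ξ|=i} sign(ξ) d_ξ built from the per-edge maps (using the multiplication m on A, the unit u: ℤ → A, and u_B: ℤ → B as described). Then d^{i+1} ∘ d^i = 0, i.e., (C^i(G), d^i) is a cochain complex. -/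

import Mathlib

/-- A finite multigraph (loops and parallel edges allowed), with a chosen
orientation of each edge given by source and target maps. -/
structure Multigraph where
  V : Type
  E : Type
  [fintypeV : Fintype V]
  [fintypeE : Fintype E]
  [decEqV : DecidableEq V]
  [decEqE : DecidableEq E]
  src : E → V
  tgt : E → V

attribute [instance] Multigraph.fintypeV Multigraph.fintypeE
  Multigraph.decEqV Multigraph.decEqE

namespace Multigraph

variable (G : Multigraph)

/-- Two vertices are directly joined by an edge of the spanning subgraph `[G:S]`. -/
def connRel (S : Finset G.E) (a b : G.V) : Prop :=
  ∃ e ∈ S, (G.src e = a ∧ G.tgt e = b)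

/-- The "same connected component of `[G:S]`" equivalence relation. -/
def connSetoid (S : Finset G.E) : Setoid G.V := Relation.EqvGen.setoid (G.connRel S)

/-- The set of connected components of the spanning subgraph `[G:S]`. -/
def Comp (S : Finset G.E) : Type := Quotient (G.connSetoid S)

noncomputable instance (S : Finset G.E) : Fintype (G.Comp S) := by
  classical exact Quotient.fintype _

noncomputable instance (S : Finset G.E) : DecidableEq (G.Comp S) :=
  Classical.decEq _

/-- `b₀([G:S])`: the number of connected components of the spanning subgraph `[G:S]`. -/
noncomputable def b0 (S : Finset G.E) : ℕ := Fintype.card (G.Comp S)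

/-- The simplicial boundary map `ℚ^S → ℚ^V`, sending an edge to (target − source). -/
noncomputable def boundary (S : Finset G.E) : ((↥S) → ℚ) →ₗ[ℚ] (G.V → ℚ) :=
  ∑ e : ↥S, LinearMap.smulRight (LinearMap.proj e)
    (fun v => (if G.tgt e.1 = v then (1 : ℚ) else 0) - (if G.src e.1 = v then 1 else 0))

/-- `b₁([G:S])`: the first Betti number of `[G:S]`, i.e. the rank of its cycle space. -/
noncomputable def b1 (S : Finset G.E) : ℕ :=
  Module.finrank ℚ (LinearMap.ker (G.boundary S))

end Multigraph

/-- The pushforward of free `ℤ`-modules along a partially defined map of bases: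
a basis element `a` is sent to `g a` if defined, and to `0` otherwise. -/
noncomputable def pushMap {α β : Type*} [Fintype α] [DecidableEq β]
    (g : α → Option β) : (α → ℤ) →ₗ[ℤ] (β → ℤ) where
  toFun φ b := ∑ a : α, if g a = some b then φ a else 0
  map_add' φ ψ := by
    funext b
    simp only [Pi.add_apply]
    rw [← Finset.sum_add_distrib]
    refine Finset.sum_congr rfl fun a _ => ?_
    by_cases h : g a = some b <;> simp [h]
  map_smul' c φ := by
    funext b
    try dsimp only
    rw [RingHom.id_apply, Pi.smul_apply, smul_eq_mul, Finset.mul_sum]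
    refine Finset.sum_congr rfl fun a _ => ?_
    by_cases h : g a = some b <;> simp [h]

namespace Multigraph

variable (G : Multigraph)

/-- The standard `ℤ`-basis of `C^S(G) = A^{⊗|S|} ⊗ A^{⊗b₀([G:S])} ⊗ B^{⊗b₁([G:S])}`,
where `A = ℤ[t]/(t²)` and `B = ℤ[w]/(w²)`:  a factor of `A` (basis `{1, t}`) for
each edge of `S` and each component of `[G:S]`, and a factor of `B` (basis
`{1, w}`) for each of the `b₁([G:S])` independent cycles.  `false` encodes
`1` and `true` encodes `t` (resp. `w`). -/
abbrev YBasis (S : Finset G.E) : Type :=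
  (↥S → Bool) × (G.Comp S → Bool) × (Fin (G.b1 S) → Bool)

/-- The chain module `C^S(G)`, the free `ℤ`-module on `YBasis G S`. -/
abbrev Cmod (S : Finset G.E) : Type := G.YBasis S → ℤ

/-- The natural map on components induced by `T.erase e ⊆ T`. -/
def compPush (T : Finset G.E) (e : G.E) : G.Comp (T.erase e) → G.Comp T :=
  Quotient.map id (by
    intro a b hab
    refine Relation.EqvGen.mono ?_ _ _ hab
    rintro x y ⟨e', he', hx, hy⟩
    exact ⟨e', Finset.mem_of_mem_erase he', hx, hy⟩)

/-- Multiplication `A ⊗ A → A` along a merging of components, as a partially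
defined map of bases: the result is undefined (`0`) when two merged components
both carry `t` (since `t² = 0`), and otherwise the resulting component carries
`t` iff some preimage component does. -/
noncomputable def mergeMap (T : Finset G.E) (e : G.E)
    (b : G.Comp (T.erase e) → Bool) : Option (G.Comp T → Bool) :=
  if ∃ c c' : G.Comp (T.erase e),
      c ≠ c' ∧ G.compPush T e c = G.compPush T e c' ∧ b c ∧ b c' then
    none
  else
    some fun d => decide (∃ c, G.compPush T e c = d ∧ b c)

/-- Inserting the unit `1 ∈ A` in the tensor factor of the new edge `e`. -/
def edgeExt (T : Finset G.E) (e : G.E) (a : ↥(T.erase e) → Bool) : ↥T → Bool :=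
  fun x => if hx : x.1 = e then false
    else a ⟨x.1, Finset.mem_erase.mpr ⟨hx, x.2⟩⟩

/-- The map `B^{⊗ν₀} → B^{⊗ν₁}` on bases: the identity when `ν₁ = ν₀`, and
appending a unit `1 ∈ B` in a new last factor when `ν₁ = ν₀ + 1`. -/
def cycExt (ν₀ ν₁ : ℕ) (c : Fin ν₀ → Bool) : Fin ν₁ → Bool :=
  fun i => if h : (i : ℕ) < ν₀ then c ⟨i, h⟩ else false

/-- The per-edge map `d_ξ` on bases, for the cube edge `ξ` joining
`S₀ = T.erase e` to `S₁ = T`. -/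
noncomputable def basisStep (T : Finset G.E) (e : G.E) :
    G.YBasis (T.erase e) → Option (G.YBasis T) :=
  fun v => (G.mergeMap T e v.2.1).map
    (fun b' => (G.edgeExt T e v.1, b', cycExt (G.b1 (T.erase e)) (G.b1 T) v.2.2))

/-- The per-edge map `d_ξ : C^{T∖e}(G) → C^T(G)`. -/
noncomputable def stepMap (T : Finset G.E) (e : G.E) :
    G.Cmod (T.erase e) →ₗ[ℤ] G.Cmod T :=
  pushMap (G.basisStep T e)

/-- The `i`-th chain module `C^i(G) = ⊕_{|S| = i} C^S(G)`. -/
abbrev Cchain (i : ℕ) : Type :=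
  (S : {S : Finset G.E // S.card = i}) → G.Cmod S.1

/-- The differential `d^i : C^i(G) → C^{i+1}(G)`, where the edge ordering is
given by an injective labelling `π : E → ℕ`;  the per-edge map for adding the
edge `e` to `S₀` enters with the sign `(−1)^{#{x ∈ S₀ : π x < π e}}`. -/
noncomputable def diff (π : G.E → ℕ) (i : ℕ) :
    G.Cchain i →ₗ[ℤ] G.Cchain (i + 1) :=
  LinearMap.pi fun T =>
    ∑ e ∈ T.1.attach,
      ((-1 : ℤ) ^ (((T.1.erase e.1).filter (fun x => π x < π e.1)).card)) •
        ((G.stepMap T.1 e.1).comp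
          (LinearMap.proj
            (⟨T.1.erase e.1, by
              simp [Finset.card_erase_of_mem e.2, T.2]⟩ :
              {S : Finset G.E // S.card = i})))

end Multigraph
section PushAux

theorem pushMap_bind_aux {α β γ : Type*} [Fintype α] [Fintype β] [DecidableEq β] [DecidableEq γ]
    (g₁ : α → Option β) (g₂ : β → Option γ) (φ : α → ℤ) (c : γ) :
    (∑ b : β, if g₂ b = some c then (∑ a : α, if g₁ a = some b then φ a else 0) else 0)
      = ∑ a : α, if (g₁ a).bind g₂ = some c then φ a else 0 := by
  calc (∑ b : β, if g₂ b = some c then (∑ a : α, if g₁ a = some b then φ a else 0) else 0)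
      = ∑ b : β, ∑ a : α, if g₂ b = some c then (if g₁ a = some b then φ a else 0) else 0 := by
        refine Finset.sum_congr rfl fun b _ => ?_
        by_cases h : g₂ b = some c <;> simp [h]
    _ = ∑ a : α, ∑ b : β, if g₂ b = some c then (if g₁ a = some b then φ a else 0) else 0 :=
        Finset.sum_comm
    _ = ∑ a : α, if (g₁ a).bind g₂ = some c then φ a else 0 := by
        refine Finset.sum_congr rfl fun a _ => ?_
        cases h : g₁ a with
        | none => simp [h]
        | some b₀ =>
          rw [Option.bind_some]
          have : ∀ b : β, (if g₂ b = some c then if some b₀ = some b then φ a else 0 else 0)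
              = if b₀ = b then (if g₂ b = some c then φ a else 0) else 0 := by
            intro b
            by_cases hb : b₀ = b
            · subst hb; simp
            · simp [hb]
          rw [Finset.sum_congr rfl fun b _ => this b, Finset.sum_ite_eq]
          simp

theorem pushMap_comp {α β γ : Type*} [Fintype α] [Fintype β] [DecidableEq β] [DecidableEq γ]
    (g₁ : α → Option β) (g₂ : β → Option γ) :
    (pushMap g₂).comp (pushMap g₁) = pushMap (fun a => (g₁ a).bind g₂) := by
  apply LinearMap.ext; intro φ
  funext c
  simp only [LinearMap.comp_apply, pushMap, LinearMap.coe_mk, AddHom.coe_mk]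
  exact pushMap_bind_aux g₁ g₂ φ c

theorem cycExt_comp (ν₀ ν₁ ν₂ : ℕ) (h : ν₀ ≤ ν₁) (c : Fin ν₀ → Bool) :
    Multigraph.cycExt ν₁ ν₂ (Multigraph.cycExt ν₀ ν₁ c) = Multigraph.cycExt ν₀ ν₂ c := by
  funext i
  unfold Multigraph.cycExt
  by_cases h0 : (i : ℕ) < ν₀
  · rw [dif_pos (lt_of_lt_of_le h0 h), dif_pos h0]
  · rw [dif_neg h0]
    by_cases h1 : (i : ℕ) < ν₁
    · rw [dif_pos h1, dif_neg h0]
    · rw [dif_neg h1]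

end PushAux

namespace Multigraph

variable (G : Multigraph)

noncomputable def extMap (S T : Finset G.E) : ((↥S) → ℚ) →ₗ[ℚ] ((↥T) → ℚ) where
  toFun φ x := if hx : x.1 ∈ S then φ ⟨x.1, hx⟩ else 0
  map_add' φ ψ := by funext x; by_cases hx : x.1 ∈ S <;> simp [hx]
  map_smul' c φ := by funext x; by_cases hx : x.1 ∈ S <;> simp [hx]

lemma boundary_extMap (S T : Finset G.E) (hST : S ⊆ T) (φ : (↥S) → ℚ) :
    G.boundary T (G.extMap S T φ) = G.boundary S φ := by
  unfold boundary
  simp only [LinearMap.sum_apply, LinearMap.smulRight_apply, LinearMap.proj_apply]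
  set g : G.E → (G.V → ℚ) := fun e v =>
    (if G.tgt e = v then (1 : ℚ) else 0) - (if G.src e = v then 1 else 0) with hg
  have hR : (∑ e : ↥S, φ e • g e.1)
      = ∑ e : ↥S, (if h : e.1 ∈ S then φ ⟨e.1, h⟩ else 0) • g e.1 := by
    refine Finset.sum_congr rfl fun e _ => ?_
    rw [dif_pos e.2]
  rw [hR]
  have hL : (∑ x : ↥T, (G.extMap S T φ) x • g x.1)
      = ∑ x : ↥T, (if h : x.1 ∈ S then φ ⟨x.1, h⟩ else 0) • g x.1 := rfl
  rw [hL]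
  rw [Finset.sum_coe_sort T (fun x => (if h : x ∈ S then φ ⟨x, h⟩ else 0) • g x),
      Finset.sum_coe_sort S (fun x => (if h : x ∈ S then φ ⟨x, h⟩ else 0) • g x)]
  exact (Finset.sum_subset hST (fun x _ hxS => by simp [hxS])).symm

lemma b1_mono (S T : Finset G.E) (hST : S ⊆ T) : G.b1 S ≤ G.b1 T := by
  classical
  have hinj : Function.Injective (G.extMap S T) := by
    intro φ ψ h
    funext x
    have h2 := congrFun h ⟨x.1, hST x.2⟩
    simpa [extMap, x.2] using h2
  let L : LinearMap.ker (G.boundary S) →ₗ[ℚ] LinearMap.ker (G.boundary T) :=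
    (G.extMap S T).restrict (p := LinearMap.ker (G.boundary S))
      (q := LinearMap.ker (G.boundary T))
      (fun φ hφ => by
        simp only [LinearMap.mem_ker] at hφ ⊢
        rw [G.boundary_extMap S T hST, hφ])
  have hLinj : Function.Injective L := by
    intro x y hxy
    exact Subtype.ext (hinj (congrArg Subtype.val hxy))
  exact LinearMap.finrank_le_finrank_of_injective hLinj

end Multigraph
namespace Multigraph

variable (G : Multigraph)

/-- Push components along any subset inclusion. -/
def subsetPush (S T : Finset G.E) (hST : S ⊆ T) : G.Comp S → G.Comp T :=
  Quotient.map id (by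
    intro a b hab
    refine Relation.EqvGen.mono ?_ _ _ hab
    rintro x y ⟨e', he', hx, hy⟩
    exact ⟨e', hST he', hx, hy⟩)

lemma compPush_mk (T : Finset G.E) (e : G.E) (x : G.V) :
    G.compPush T e (Quotient.mk (G.connSetoid (T.erase e)) x)
      = Quotient.mk (G.connSetoid T) x := rfl

lemma subsetPush_mk (S T : Finset G.E) (hST : S ⊆ T) (x : G.V) :
    G.subsetPush S T hST (Quotient.mk (G.connSetoid S) x)
      = Quotient.mk (G.connSetoid T) x := rfl

lemma compPush_compPush (T : Finset G.E) (e f : G.E)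
    (hsub : (T.erase e).erase f ⊆ T) (q : G.Comp ((T.erase e).erase f)) :
    G.compPush T e (G.compPush (T.erase e) f q)
      = G.subsetPush ((T.erase e).erase f) T hsub q := by
  induction q using Quotient.ind
  rfl

open Classical in
/-- The symmetric description of the two-step map on bases. -/
noncomputable def symmStep (S T : Finset G.E) (hST : S ⊆ T) :
    G.YBasis S → Option (G.YBasis T) := fun v =>
  if ∃ c c' : G.Comp S, c ≠ c' ∧ G.subsetPush S T hST c = G.subsetPush S T hST c'
      ∧ v.2.1 c ∧ v.2.1 c' then
    none
  else
    some (fun x => if hx : x.1 ∈ S then v.1 ⟨x.1, hx⟩ else false,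
      fun d => decide (∃ c, G.subsetPush S T hST c = d ∧ v.2.1 c),
      cycExt (G.b1 S) (G.b1 T) v.2.2)

lemma mergeMap_bind (T : Finset G.E) (e f : G.E)
    (hsub : (T.erase e).erase f ⊆ T)
    (b : G.Comp ((T.erase e).erase f) → Bool) :
    (G.mergeMap (T.erase e) f b).bind (G.mergeMap T e) =
      (if ∃ c c' : G.Comp ((T.erase e).erase f), c ≠ c'
          ∧ G.subsetPush _ T hsub c = G.subsetPush _ T hsub c' ∧ b c ∧ b c' then
        none
      else
        some fun d => decide (∃ c, G.subsetPush _ T hsub c = d ∧ b c)) := by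
  classical
  set P : G.Comp ((T.erase e).erase f) → G.Comp T := G.subsetPush _ T hsub with hP
  have hPc : ∀ c, P c = G.compPush T e (G.compPush (T.erase e) f c) :=
    fun c => (G.compPush_compPush T e f hsub c).symm
  unfold mergeMap
  by_cases h₁ : ∃ c c' : G.Comp ((T.erase e).erase f), c ≠ c'
      ∧ G.compPush (T.erase e) f c = G.compPush (T.erase e) f c' ∧ b c ∧ b c'
  · rw [if_pos h₁, Option.bind_none]
    obtain ⟨c, c', hne, hpp, hc, hc'⟩ := h₁
    rw [if_pos ⟨c, c', hne, by rw [hPc, hPc, hpp], hc, hc'⟩]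
  · rw [if_neg h₁, Option.bind_some]
    set b₁ : G.Comp (T.erase e) → Bool :=
      fun d => decide (∃ c, G.compPush (T.erase e) f c = d ∧ b c) with hb₁
    have hb₁' : ∀ d, b₁ d = true ↔ ∃ c, G.compPush (T.erase e) f c = d ∧ b c := by
      intro d; rw [hb₁]; simp
    by_cases h₂ : ∃ d d' : G.Comp (T.erase e), d ≠ d'
        ∧ G.compPush T e d = G.compPush T e d' ∧ b₁ d ∧ b₁ d'
    · rw [if_pos h₂]
      obtain ⟨d, d', hdd, hpp, hd, hd'⟩ := h₂
      obtain ⟨c, hc, hbc⟩ := (hb₁' d).mp hd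
      obtain ⟨c', hc', hbc'⟩ := (hb₁' d').mp hd'
      have hcc : c ≠ c' := by
        intro hcc; subst hcc; exact hdd (hc.symm.trans hc')
      rw [if_pos ⟨c, c', hcc, by rw [hPc, hPc, hc, hc', hpp], hbc, hbc'⟩]
    · rw [if_neg h₂]
      have hout : ¬ ∃ c c' : G.Comp ((T.erase e).erase f), c ≠ c'
          ∧ P c = P c' ∧ b c ∧ b c' := by
        rintro ⟨c, c', hcc, hpp, hc, hc'⟩
        by_cases hff : G.compPush (T.erase e) f c = G.compPush (T.erase e) f c'
        · exact h₁ ⟨c, c', hcc, hff, hc, hc'⟩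
        · refine h₂ ⟨_, _, hff, ?_, ?_, ?_⟩
          · rw [← hPc, ← hPc, hpp]
          · exact (hb₁' _).mpr ⟨c, rfl, hc⟩
          · exact (hb₁' _).mpr ⟨c', rfl, hc'⟩
      rw [if_neg hout]
      congr 1
      funext d
      rw [decide_eq_decide]
      constructor
      · rintro ⟨d₁, hd₁, hb⟩
        obtain ⟨c, hc, hbc⟩ := (hb₁' d₁).mp hb
        exact ⟨c, by rw [hPc, hc, hd₁], hbc⟩
      · rintro ⟨c, hc, hbc⟩
        exact ⟨G.compPush (T.erase e) f c, by rw [← hPc, hc], (hb₁' _).mpr ⟨c, rfl, hbc⟩⟩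

lemma edgeExt_comp (T : Finset G.E) (e f : G.E)
    (a : ↥((T.erase e).erase f) → Bool) :
    G.edgeExt T e (G.edgeExt (T.erase e) f a)
      = fun x : ↥T => if hx : x.1 ∈ (T.erase e).erase f then a ⟨x.1, hx⟩ else false := by
  funext x
  unfold edgeExt
  by_cases hxe : x.1 = e
  · rw [dif_pos hxe, dif_neg (by simp [Finset.mem_erase, hxe])]
  · rw [dif_neg hxe]
    by_cases hxf : x.1 = f
    · rw [dif_pos hxf, dif_neg (by simp [Finset.mem_erase, hxf])]
    · rw [dif_neg hxf, dif_pos (Finset.mem_erase.mpr ⟨hxf, Finset.mem_erase.mpr ⟨hxe, x.2⟩⟩)]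

end Multigraph
namespace Multigraph

variable (G : Multigraph)

lemma basisStep_bind (T : Finset G.E) (e f : G.E) (hsub : (T.erase e).erase f ⊆ T)
    (v : G.YBasis ((T.erase e).erase f)) :
    (G.basisStep (T.erase e) f v).bind (G.basisStep T e) = G.symmStep _ T hsub v := by
  classical
  have step1 : (G.basisStep (T.erase e) f v).bind (G.basisStep T e)
      = ((G.mergeMap (T.erase e) f v.2.1).bind (G.mergeMap T e)).map
          (fun b' => (G.edgeExt T e (G.edgeExt (T.erase e) f v.1), b',
            cycExt (G.b1 (T.erase e)) (G.b1 T)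
              (cycExt (G.b1 ((T.erase e).erase f)) (G.b1 (T.erase e)) v.2.2))) := by
    unfold basisStep
    cases G.mergeMap (T.erase e) f v.2.1 with
    | none => rfl
    | some b₁ =>
      simp only [Option.map_some, Option.bind_some]
  rw [step1, G.mergeMap_bind T e f hsub v.2.1]
  rw [symmStep]
  by_cases hP : ∃ c c' : G.Comp ((T.erase e).erase f), c ≠ c'
      ∧ G.subsetPush _ T hsub c = G.subsetPush _ T hsub c' ∧ v.2.1 c ∧ v.2.1 c'
  · rw [if_pos hP, if_pos hP, Option.map_none]
  · rw [if_neg hP, if_neg hP, Option.map_some]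
    refine congrArg some ?_
    simp only [Prod.mk.injEq]
    exact ⟨G.edgeExt_comp T e f v.1, trivial,
      cycExt_comp _ _ _ (G.b1_mono _ _ (Finset.erase_subset _ _)) v.2.2⟩

lemma stepMap_comp (T : Finset G.E) (e f : G.E) (hsub : (T.erase e).erase f ⊆ T) :
    (G.stepMap T e).comp (G.stepMap (T.erase e) f) = pushMap (G.symmStep _ T hsub) := by
  unfold stepMap
  rw [pushMap_comp]
  congr 1
  funext v
  exact G.basisStep_bind T e f hsub v

lemma push_indep (i : ℕ) (T S₁ S₂ : Finset G.E) (h : S₁ = S₂) (h₁ : S₁ ⊆ T) (h₂ : S₂ ⊆ T)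
    (p₁ : S₁.card = i) (p₂ : S₂.card = i) (φ : G.Cchain i) :
    pushMap (G.symmStep S₁ T h₁) (φ ⟨S₁, p₁⟩) = pushMap (G.symmStep S₂ T h₂) (φ ⟨S₂, p₂⟩) := by
  subst h; rfl

lemma sign_aux (π : G.E → ℕ) (T : Finset G.E)
    (e f : G.E) (hf : f ∈ T) (hef : f ≠ e) (hlt : π f < π e) :
    ((T.erase e).filter (fun x => π x < π e)).card
      = (((T.erase f).erase e).filter (fun x => π x < π e)).card + 1
  ∧ (((T.erase e).erase f).filter (fun x => π x < π f)).card
      = ((T.erase f).filter (fun x => π x < π f)).card := by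
  constructor
  · have h : (T.erase e).filter (fun x => π x < π e)
        = insert f (((T.erase f).erase e).filter (fun x => π x < π e)) := by
      ext x
      simp only [Finset.mem_filter, Finset.mem_erase, Finset.mem_insert]
      constructor
      · rintro ⟨⟨hxe, hxT⟩, hx⟩
        by_cases hxf : x = f
        · exact Or.inl hxf
        · exact Or.inr ⟨⟨hxe, hxf, hxT⟩, hx⟩
      · rintro (rfl | ⟨⟨hxe, hxf, hxT⟩, hx⟩)
        · exact ⟨⟨hef, hf⟩, hlt⟩
        · exact ⟨⟨hxe, hxT⟩, hx⟩
    rw [h, Finset.card_insert_of_notMem (by simp [Finset.mem_filter, Finset.mem_erase])]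
  · congr 1
    ext x
    simp only [Finset.mem_filter, Finset.mem_erase]
    constructor
    · rintro ⟨⟨hxf, hxe, hxT⟩, hx⟩; exact ⟨⟨hxf, hxT⟩, hx⟩
    · rintro ⟨⟨hxf, hxT⟩, hx⟩
      refine ⟨⟨hxf, ?_, hxT⟩, hx⟩
      rintro rfl
      exact absurd hx (lt_asymm hlt)

lemma sign_cancel (π : G.E → ℕ) (hπ : Function.Injective π) (T : Finset G.E)
    (e f : G.E) (he : e ∈ T) (hf : f ∈ T) (hef : e ≠ f) :
    ((-1 : ℤ) ^ ((T.erase e).filter (fun x => π x < π e)).card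
      * (-1 : ℤ) ^ (((T.erase e).erase f).filter (fun x => π x < π f)).card)
    + ((-1 : ℤ) ^ ((T.erase f).filter (fun x => π x < π f)).card
      * (-1 : ℤ) ^ (((T.erase f).erase e).filter (fun x => π x < π e)).card) = 0 := by
  have hne : π f ≠ π e := fun h => hef (hπ h).symm
  rcases lt_or_gt_of_ne hne with hlt | hlt
  · obtain ⟨h1, h2⟩ := sign_aux G π T e f hf hef.symm hlt
    rw [h1, h2, pow_succ]
    ring
  · obtain ⟨h1, h2⟩ := sign_aux G π T f e he hef hlt
    rw [h1, h2, pow_succ]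
    ring

end Multigraph
open Multigraph in
/-- `(C^i(G), d^i)` is a cochain complex: `d^{i+1} ∘ d^i = 0`. -/
theorem diff_comp_diff (G : Multigraph) (π : G.E → ℕ) (hπ : Function.Injective π)
    (i : ℕ) : (G.diff π (i + 1)).comp (G.diff π i) = 0 := by
  apply LinearMap.ext; intro φ
  funext T
  simp only [LinearMap.comp_apply, LinearMap.zero_apply, Pi.zero_apply]
  simp only [Multigraph.diff, LinearMap.pi_apply, LinearMap.sum_apply, LinearMap.smul_apply,
    LinearMap.comp_apply, LinearMap.proj_apply]
  simp only [map_sum, map_smul, Finset.smul_sum, smul_smul]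
  rw [Finset.sum_sigma']
  refine Finset.sum_involution
    (fun p _ => ⟨⟨p.2.1, Finset.mem_of_mem_erase p.2.2⟩,
      ⟨p.1.1, Finset.mem_erase.mpr
        ⟨(Finset.mem_erase.mp p.2.2).1.symm, p.1.2⟩⟩⟩)
    ?_ ?_ (fun p hp => Finset.mem_sigma.mpr ⟨Finset.mem_attach _ _, Finset.mem_attach _ _⟩)
    (fun p hp => rfl)
  · -- cancellation
    rintro ⟨e, f⟩ hp
    dsimp only
    have hef : e.1 ≠ f.1 := (Finset.mem_erase.mp f.2).1.symm
    have hsub1 : ((T.1).erase e.1).erase f.1 ⊆ T.1 :=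
      (Finset.erase_subset _ _).trans (Finset.erase_subset _ _)
    have hsub2 : ((T.1).erase f.1).erase e.1 ⊆ T.1 :=
      (Finset.erase_subset _ _).trans (Finset.erase_subset _ _)
    rw [← LinearMap.comp_apply (G.stepMap (↑T) ↑e), ← LinearMap.comp_apply (G.stepMap (↑T) ↑f),
        G.stepMap_comp T.1 e.1 f.1 hsub1, G.stepMap_comp T.1 f.1 e.1 hsub2]
    rw [G.push_indep i T.1 _ _ Finset.erase_right_comm hsub2 hsub1 _
      (by simp [Finset.card_erase_of_mem, Finset.mem_erase.mp f.2, e.2, T.2]) φ]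
    rw [← add_smul, G.sign_cancel π hπ T.1 e.1 f.1 e.2 (Finset.mem_of_mem_erase f.2) hef,
      zero_smul]
  · rintro ⟨e, f⟩ hp _
    intro hcontra
    have h1 : e.1 = f.1 := congrArg (fun q => q.1.1) hcontra.symm
    exact absurd h1 (Finset.mem_erase.mp f.2).1.symm
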